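/- arXiv:0904.2936 — 2 statements merged into one kernel-verified Lean document; each statement's English description precedes it below -/
import Mathlib

section
/- Let r_1,...,r_s be positive real numbers, m a positive integer, and N a positive integer. Suppose (a_i)_{i∈I} is a family of real numbers of the form a_i = (1/m)·Σ_{j=1}^s r_j n_{i,j} where each n_{i,j} is an integer with n_{i,j} ≥ -N, and suppose each a_i < 0. Also suppose r'_1,...,r'_t are positive reals, m' a positive integer, and b_i = (1/m')·Σ_{k=1}^t r'_k n'_{i,k} with n'_{i,k} nonnegative integers, and set μ_i = -a_i/(b_i - a_i) (assuming b_i - a_i > 0, equivalently μ_i ∈ (0,1]). Then sup_{i∈I} μ_i is attained: there exists l ∈ I with μ_l = sup_i μ_i. -/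
/-- Arithmetic core of Lemma 2.2: the supremum of the numbers
`μ i = -a i / (b i - a i)` is attained. -/
theorem stmt_0 {I : Type*} [Nonempty I] (s t : ℕ) (r : Fin s → ℝ) (r' : Fin t → ℝ)
    (hr : ∀ j, 0 < r j) (hr' : ∀ k, 0 < r' k)
    (m m' N : ℕ) (hm : 0 < m) (hm' : 0 < m') (hN : 0 < N)
    (n : I → Fin s → ℤ) (hn : ∀ i j, -(N : ℤ) ≤ n i j)
    (n' : I → Fin t → ℤ) (hn' : ∀ i k, 0 ≤ n' i k)
    (a b : I → ℝ)
    (ha : ∀ i, a i = (1 / (m : ℝ)) * ∑ j, r j * (n i j : ℝ))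
    (hb : ∀ i, b i = (1 / (m' : ℝ)) * ∑ k, r' k * (n' i k : ℝ))
    (haneg : ∀ i, a i < 0)
    (hpos : ∀ i, 0 < b i - a i)
    (μ : I → ℝ) (hμ : ∀ i, μ i = -a i / (b i - a i)) :
    ∃ l, ∀ i, μ i ≤ μ l := by
  classical
  obtain ⟨i₀⟩ := ‹Nonempty I›
  have hm0 : (0:ℝ) < m := by exact_mod_cast hm
  have hm'0 : (0:ℝ) < m' := by exact_mod_cast hm'
  set R : ℝ := ∑ j, r j with hRdef
  have hR0 : 0 ≤ R := Finset.sum_nonneg fun j _ => (hr j).le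
  -- the weighted sum is negative
  have hSneg : ∀ i, ∑ j, r j * (n i j : ℝ) < 0 := by
    intro i
    by_contra hcon
    push_neg at hcon
    have h := haneg i
    rw [ha i] at h
    have := mul_nonneg (one_div_pos.mpr hm0).le hcon
    linarith
  -- lower bound on a
  have ha_lb : ∀ i, -(N * R / m) ≤ a i := by
    intro i
    have hsum : ∑ j, r j * (-(N:ℝ)) ≤ ∑ j, r j * (n i j : ℝ) := by
      apply Finset.sum_le_sum
      intro j _
      have : (-(N:ℝ)) ≤ (n i j : ℝ) := by exact_mod_cast hn i j
      nlinarith [hr j]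
    have heq : ∑ j, r j * (-(N:ℝ)) = -(N * R) := by
      rw [← Finset.sum_mul]; ring
    rw [ha i]
    rw [heq] at hsum
    have h2 := mul_le_mul_of_nonneg_left hsum (one_div_pos.mpr hm0).le
    have h3 : -((N:ℝ) * R / m) = 1 / (m:ℝ) * (-((N:ℝ) * R)) := by ring
    linarith
  -- positivity of μ
  have hμpos : ∀ i, 0 < μ i := by
    intro i
    rw [hμ i]
    exact div_pos (by linarith [haneg i]) (hpos i)
  set μ0 := μ i₀ with hμ0def
  set T : Set I := {i | μ0 ≤ μ i} with hTdef
  have hi₀T : i₀ ∈ T := by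
    simp only [hTdef, Set.mem_setOf_eq]
    exact le_rfl
  -- upper bound for b on T
  set C : ℝ := (N * R / m) / μ0 with hCdef
  have hb_ub : ∀ i ∈ T, b i ≤ C := by
    intro i hi
    have h1 : μ0 ≤ -a i / (b i - a i) := by rw [← hμ i]; exact hi
    have h2 : μ0 * (b i - a i) ≤ -a i := by
      rw [le_div_iff₀ (hpos i)] at h1; linarith [h1]
    have h3 : b i - a i ≤ -a i / μ0 := by
      rw [le_div_iff₀ (hμpos i₀)]; nlinarith [h2]
    have h4 : -a i / μ0 ≤ C := by
      rw [hCdef]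
      exact (div_le_div_iff_of_pos_right (hμpos i₀)).mpr (by linarith [ha_lb i])
    linarith [haneg i, h3, h4]
  -- integer bounds
  set U : Fin s → ℤ := fun j => ⌈(N * R) / r j⌉ with hUdef
  set V : Fin t → ℤ := fun k => ⌈((m':ℝ) * C) / r' k⌉ with hVdef
  have hnU : ∀ i, ∀ j, n i j ≤ U j := by
    intro i j
    have key : r j * (n i j : ℝ) ≤ N * R := by
      have h1 : r j * (n i j:ℝ) + ∑ j' ∈ Finset.univ.erase j, r j' * (n i j':ℝ)
          = ∑ j', r j' * (n i j':ℝ) :=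
        Finset.add_sum_erase _ (fun j' => r j' * (n i j':ℝ)) (Finset.mem_univ j)
      have h2 : ∑ j' ∈ Finset.univ.erase j, (-(r j' * N)) ≤
          ∑ j' ∈ Finset.univ.erase j, r j' * (n i j':ℝ) := by
        apply Finset.sum_le_sum
        intro j' _
        have : (-(N:ℝ)) ≤ (n i j' : ℝ) := by exact_mod_cast hn i j'
        nlinarith [hr j']
      have h3 : ∑ j' ∈ Finset.univ.erase j, r j' * (N:ℝ) ≤ ∑ j', r j' * (N:ℝ) := by
        apply Finset.sum_le_sum_of_subset_of_nonneg (Finset.subset_univ _)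
        intro j' _ _
        exact mul_nonneg (hr j').le (Nat.cast_nonneg N)
      have h4 : ∑ j', r j' * (N:ℝ) = N * R := by rw [← Finset.sum_mul]; ring
      have h5 := hSneg i
      have h2' : -(∑ j' ∈ Finset.univ.erase j, r j' * (N:ℝ)) ≤
          ∑ j' ∈ Finset.univ.erase j, r j' * (n i j':ℝ) := by
        rw [← Finset.sum_neg_distrib]; exact h2
      linarith
    have hcast : (n i j : ℝ) ≤ (N * R) / r j := by
      rw [le_div_iff₀ (hr j)]; nlinarith [key]
    have := le_trans hcast (Int.le_ceil _)
    exact_mod_cast this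
  have hnV : ∀ i ∈ T, ∀ k, n' i k ≤ V k := by
    intro i hi k
    have hsum : ∑ k', r' k' * (n' i k':ℝ) = m' * b i := by
      rw [hb i]; field_simp
    have key : r' k * (n' i k : ℝ) ≤ (m':ℝ) * C := by
      have h1 : r' k * (n' i k:ℝ) + ∑ k' ∈ Finset.univ.erase k, r' k' * (n' i k':ℝ)
          = ∑ k', r' k' * (n' i k':ℝ) :=
        Finset.add_sum_erase _ (fun k' => r' k' * (n' i k':ℝ)) (Finset.mem_univ k)
      have h2 : (0:ℝ) ≤ ∑ k' ∈ Finset.univ.erase k, r' k' * (n' i k':ℝ) := by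
        apply Finset.sum_nonneg
        intro k' _
        have : (0:ℝ) ≤ (n' i k' : ℝ) := by exact_mod_cast hn' i k'
        exact mul_nonneg (hr' k').le this
      have h3 := hb_ub i hi
      nlinarith [h1, h2, h3]
    have hcast : (n' i k : ℝ) ≤ ((m':ℝ) * C) / r' k := by
      rw [le_div_iff₀ (hr' k)]; nlinarith [key]
    have := le_trans hcast (Int.le_ceil _)
    exact_mod_cast this
  -- the finite box
  set K : Set ((Fin s → ℤ) × (Fin t → ℤ)) :=
    (Set.pi Set.univ fun j => Set.Icc (-(N:ℤ)) (U j)) ×ˢ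
      (Set.pi Set.univ fun k => Set.Icc 0 (V k)) with hKdef
  have hKfin : K.Finite :=
    Set.Finite.prod (Set.Finite.pi fun j => Set.finite_Icc _ _)
      (Set.Finite.pi fun k => Set.finite_Icc _ _)
  -- μ factors through K on T
  set g : (Fin s → ℤ) × (Fin t → ℤ) → ℝ := fun p =>
    -((1 / (m : ℝ)) * ∑ j, r j * (p.1 j : ℝ)) /
      ((1 / (m' : ℝ)) * ∑ k, r' k * (p.2 k : ℝ) - (1 / (m : ℝ)) * ∑ j, r j * (p.1 j : ℝ))
    with hgdef
  have hsub : μ '' T ⊆ g '' K := by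
    rintro x ⟨i, hiT, rfl⟩
    refine ⟨(n i, n' i), ⟨?_, ?_⟩, ?_⟩
    · intro j _
      exact ⟨hn i j, hnU i j⟩
    · intro k _
      exact ⟨hn' i k, hnV i hiT k⟩
    · rw [hgdef, hμ i, ha i, hb i]
  have hfin : (μ '' T).Finite := (hKfin.image g).subset hsub
  have hne : (μ '' T).Nonempty := ⟨μ i₀, i₀, hi₀T, rfl⟩
  obtain ⟨x, hxS, hxmax⟩ := Set.Finite.exists_maximalFor id _ hfin hne
  have hxmax' : ∀ y ∈ μ '' T, y ≤ x := by
    intro y hy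
    by_contra hlt
    push_neg at hlt
    exact absurd (hxmax hy hlt.le) (not_le.mpr hlt)
  obtain ⟨l, hlT, hlx⟩ := hxS
  refine ⟨l, fun i => ?_⟩
  rcases le_total (μ i) μ0 with h | h
  · have : μ0 ≤ x := hxmax' _ ⟨i₀, hi₀T, rfl⟩
    rw [hlx]; linarith
  · have : μ i ≤ x := hxmax' _ ⟨i, h, rfl⟩
    rw [hlx]; exact this
end

section
/- Let B = Σ_i b_i D_i and M = Σ_i m_i D_i be finitely supported real-valued functions on a set of indices (prime divisors), with 0 ≤ b_i ≤ 1 and m_i ≥ 0. Define α := min{ t > 0 : ⌊(B + tM)^{≤1}⌋ ≠ ⌊B⌋ }, where D^{≤1} replaces each coefficient d_i by min(d_i, 1) and ⌊·⌋ is the coordinatewise floor. Assume some index has m_i > 0 and b_i < 1 (so that θ(B,M) := #{i : m_i ≠ 0 and b_i ≠ 1} > 0). Then: (a) α is well-defined and equals min over {i : m_i > 0, b_i < 1} of (1 - b_i)/m_i; (b) writing (B + αM)^{≤1} = B + C, the function C ≥ 0 is supported in Supp M; (c) αM = C + M' where M' ≥ 0 is supported in Supp ⌊B + C⌋; and (d)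 θ(B+C, M+C) < θ(B, M). -/
/-- Combinatorial content of Step 2 of the proof of Theorem 1.4: the jumping
threshold `α` of the round-down of `(B + tM)^{≤1}`, the properties of
`C = (B + αM)^{≤1} - B`, and the strict decrease of the invariant `θ`. -/
theorem stmt_7 {ι : Type*} [Fintype ι] (b m : ι → ℝ)
    (hb0 : ∀ i, 0 ≤ b i) (hb1 : ∀ i, b i ≤ 1) (hm : ∀ i, 0 ≤ m i)
    (hθ : ∃ i, 0 < m i ∧ b i < 1) :
    ∃ i₀, 0 < m i₀ ∧ b i₀ < 1 ∧
      let α : ℝ := (1 - b i₀) / m i₀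
      let c : ι → ℝ := fun i => min (b i + α * m i) 1 - b i
      -- (a) α is the least t > 0 at which the round-down jumps, and it is the
      -- minimum of the quotients (1 - b i)/(m i)
      IsLeast {t : ℝ | 0 < t ∧ ∃ i, ⌊min (b i + t * m i) 1⌋ ≠ ⌊b i⌋} α ∧
      (∀ i, 0 < m i → b i < 1 → α ≤ (1 - b i) / m i) ∧
      -- (b) C ≥ 0 is supported in Supp M
      (∀ i, 0 ≤ c i ∧ (c i ≠ 0 → m i ≠ 0)) ∧
      -- (c) αM = C + M' with M' ≥ 0 supported in Supp ⌊B + C⌋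
      (∀ i, 0 ≤ α * m i - c i ∧ (α * m i - c i ≠ 0 → b i + c i = 1)) ∧
      -- (d) θ strictly decreases
      Set.ncard {i | m i + c i ≠ 0 ∧ b i + c i ≠ 1} <
        Set.ncard {i | m i ≠ 0 ∧ b i ≠ 1} := by
  classical
  obtain ⟨j, hjm, hjb⟩ := hθ
  obtain ⟨i₀, hi₀, hmin⟩ := Finset.exists_min_image
    (Finset.univ.filter (fun i => 0 < m i ∧ b i < 1)) (fun i => (1 - b i) / m i)
    ⟨j, by simp [hjm, hjb]⟩
  simp only [Finset.mem_filter, Finset.mem_univ, true_and] at hi₀ hmin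
  refine ⟨i₀, hi₀.1, hi₀.2, ?_⟩
  intro α c
  have hαdef : α = (1 - b i₀) / m i₀ := rfl
  have hcdef : ∀ i, c i = min (b i + α * m i) 1 - b i := fun i => rfl
  have hαpos : 0 < α := div_pos (by linarith [hi₀.2]) hi₀.1
  have hαle : ∀ i, 0 < m i → b i < 1 → α ≤ (1 - b i) / m i := by
    intro i h1 h2
    exact hmin i ⟨h1, h2⟩
  have hαm : ∀ i, 0 < m i → b i < 1 → α * m i ≤ 1 - b i := by
    intro i h1 h2
    have := hαle i h1 h2
    rw [le_div_iff₀ h1] at this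
    exact this
  have hαm0 : α * m i₀ = 1 - b i₀ := by
    rw [hαdef, div_mul_cancel₀]
    exact ne_of_gt hi₀.1
  have hc0 : ∀ i, m i = 0 → c i = 0 := by
    intro i h
    rw [hcdef, h, mul_zero, add_zero, min_eq_left (hb1 i), sub_self]
  have hcb1 : ∀ i, b i = 1 → c i = 0 := by
    intro i h
    rw [hcdef, h]
    have : min (1 + α * m i) 1 = 1 :=
      min_eq_right (by nlinarith [hm i, hαpos.le])
    rw [this, sub_self]
  have hcnn : ∀ i, 0 ≤ c i := by
    intro i
    rw [hcdef]
    have : b i ≤ min (b i + α * m i) 1 :=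
      le_min (by nlinarith [hm i, hαpos.le]) (hb1 i)
    linarith
  have hbc0 : b i₀ + c i₀ = 1 := by
    rw [hcdef, hαm0]
    norm_num
  refine ⟨⟨⟨hαpos, ⟨i₀, ?_⟩⟩, ?_⟩, hαle, ?_, ?_, ?_⟩
  · -- floor jumps at i₀ for t = α
    rw [hαm0]
    have h1 : min (b i₀ + (1 - b i₀)) 1 = 1 := by norm_num
    rw [h1, Int.floor_one, Int.floor_eq_zero_iff.mpr ⟨hb0 i₀, hi₀.2⟩]
    norm_num
  · -- lower bound
    rintro t ⟨ht, i, hi⟩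
    have hmi : 0 < m i := by
      rcases lt_or_eq_of_le (hm i) with h | h
      · exact h
      · exfalso; apply hi; rw [← h, mul_zero, add_zero, min_eq_left (hb1 i)]
    have hbi : b i < 1 := by
      rcases lt_or_eq_of_le (hb1 i) with h | h
      · exact h
      · exfalso; apply hi
        rw [h, min_eq_right (by nlinarith [ht.le, hm i]), Int.floor_one]
    have hfb : ⌊b i⌋ = 0 := Int.floor_eq_zero_iff.mpr ⟨hb0 i, hbi⟩
    have h1 : 1 ≤ b i + t * m i := by
      by_contra h
      push_neg at h
      apply hi
      rw [hfb, min_eq_left h.le]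
      exact Int.floor_eq_zero_iff.mpr ⟨by nlinarith [hb0 i, ht.le], h⟩
    calc α ≤ (1 - b i) / m i := hαle i hmi hbi
      _ ≤ t := by rw [div_le_iff₀ hmi]; linarith
  · -- (b)
    intro i
    refine ⟨hcnn i, ?_⟩
    intro h hm0
    exact h (hc0 i hm0)
  · -- (c)
    intro i
    constructor
    · rw [hcdef]
      have := min_le_left (b i + α * m i) 1
      linarith
    · intro h
      rcases min_cases (b i + α * m i) 1 with ⟨heq, _⟩ | ⟨heq, _⟩
      · exfalso; apply h; rw [hcdef, heq]; ring
      · rw [hcdef, heq]; ring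
  · -- (d)
    have hsub : {i | m i + c i ≠ 0 ∧ b i + c i ≠ 1} ⊆ {i | m i ≠ 0 ∧ b i ≠ 1} := by
      rintro i ⟨h1, h2⟩
      constructor
      · intro h
        exact h1 (by rw [h, hc0 i h, add_zero])
      · intro h
        exact h2 (by rw [hcb1 i h, add_zero, h])
    have hss : {i | m i + c i ≠ 0 ∧ b i + c i ≠ 1} ⊂ {i | m i ≠ 0 ∧ b i ≠ 1} := by
      refine ⟨hsub, fun h => ?_⟩
      have := h ⟨ne_of_gt hi₀.1, ne_of_lt hi₀.2⟩
      exact this.2 hbc0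
    exact Set.ncard_lt_ncard hss (Set.toFinite _)
end
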